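/- arXiv:1405.5981 — 3 statements merged into one kernel-verified Lean document; each statement's English description precedes it below -/
import Mathlib

section
/- Let R be a finite commutative local ring and let f(x), g(x) be nonzero polynomials in R[x] with g(x) regular. Then there exist polynomials q(x) and r(x) in R[x] with f(x) = g(x)q(x) + r(x) and either r(x) = 0 or deg(r(x)) < deg(g(x)), where the degree of a polynomial h is defined as the degree of its image in (R/M)[x]. -/
open Polynomial IsLocalRing

/-- Key induction: dividing by `g = c*h + e` with `h` monic and `e` having
coefficients in the maximal ideal. -/
lemma aux_div {R : Type*} [CommRing R] [IsLocalRing R] {g h e : Polynomial R} {c : Rˣ}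
    (hh : h.Monic) (hge : g = C (c : R) * h + e)
    (he : e ∈ (IsLocalRing.maximalIdeal R).map (C : R →+* Polynomial R))
    {k : ℕ} (hk : (IsLocalRing.maximalIdeal R) ^ k = ⊥) :
    ∀ t : ℕ, ∀ f : Polynomial R,
      f ∈ ((IsLocalRing.maximalIdeal R) ^ (k - t)).map (C : R →+* Polynomial R) →
      ∃ q r : Polynomial R, f = g * q + r ∧ r.degree < h.degree := by
  set M := IsLocalRing.maximalIdeal R with hM
  intro t
  induction t with
  | zero =>
      intro f hfmem
      simp only [Nat.sub_zero, hk, Ideal.map_bot, Ideal.mem_bot] at hfmem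
      refine ⟨0, 0, by simp [hfmem], ?_⟩
      rw [Polynomial.degree_zero, bot_lt_iff_ne_bot, ne_eq, degree_eq_bot]
      exact hh.ne_zero
  | succ t ih =>
      intro f hfmem
      set q₀ := f /ₘ h with hq₀
      set r₀ := f %ₘ h with hr₀
      have hfe : f = h * q₀ + r₀ := by
        rw [hq₀, hr₀, add_comm]; exact (modByMonic_add_div f h).symm
      have hr₀deg : r₀.degree < h.degree := degree_modByMonic_lt f hh
      -- coefficients of q₀ lie in M ^ (k - (t+1))
      have hq₀mem : q₀ ∈ (M ^ (k - (t + 1))).map (C : R →+* Polynomial R) := by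
        rw [Ideal.mem_map_C_iff] at hfmem ⊢
        have hmap : f.map (Ideal.Quotient.mk (M ^ (k - (t + 1)))) = 0 := by
          ext i
          simp [Polynomial.coeff_map, Ideal.Quotient.eq_zero_iff_mem, hfmem i]
        intro i
        have : q₀.map (Ideal.Quotient.mk (M ^ (k - (t + 1)))) = 0 := by
          rw [hq₀, Polynomial.map_divByMonic _ hh, hmap, zero_divByMonic]
        have := congrArg (fun p => Polynomial.coeff p i) this
        simpa [Polynomial.coeff_map, Ideal.Quotient.eq_zero_iff_mem] using this
      -- h in terms of g
      have hh_eq : C ((c⁻¹ : Rˣ) : R) * (g - e) = h := by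
        rw [hge]
        have : (C ((c : R)) : Polynomial R) * h + e - e = C ((c : R)) * h := by ring
        rw [this, ← mul_assoc, ← map_mul, Units.inv_mul, map_one, one_mul]
      set f' := C ((c⁻¹ : Rˣ) : R) * (e * q₀) with hf'
      have hf'mem : f' ∈ (M ^ (k - t)).map (C : R →+* Polynomial R) := by
        have h1 : e * q₀ ∈ (M * M ^ (k - (t + 1))).map (C : R →+* Polynomial R) := by
          rw [Ideal.map_mul]
          exact Ideal.mul_mem_mul he hq₀mem
        have h2 : M * M ^ (k - (t + 1)) ≤ M ^ (k - t) := by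
          rw [← pow_succ']
          exact Ideal.pow_le_pow_right (by omega)
        exact Ideal.mul_mem_left _ _ (Ideal.map_mono h2 h1)
      obtain ⟨q', r', hqr', hr'deg⟩ := ih f' hf'mem
      refine ⟨C ((c⁻¹ : Rˣ) : R) * q₀ - q', r₀ - r', ?_, ?_⟩
      · have : f = C ((c⁻¹ : Rˣ) : R) * (g - e) * q₀ + r₀ := by rw [hh_eq]; exact hfe
        calc f = C ((c⁻¹ : Rˣ) : R) * (g - e) * q₀ + r₀ := this
          _ = g * (C ((c⁻¹ : Rˣ) : R) * q₀) - f' + r₀ := by rw [hf']; ring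
          _ = g * (C ((c⁻¹ : Rˣ) : R) * q₀) - (g * q' + r') + r₀ := by rw [← hqr']
          _ = g * (C ((c⁻¹ : Rˣ) : R) * q₀ - q') + (r₀ - r') := by ring
      · exact lt_of_le_of_lt (degree_sub_le _ _) (max_lt hr₀deg hr'deg)

/-- Division algorithm over a finite commutative local ring: for nonzero
`f, g` with `g` regular there are `q, r` with `f = g q + r` and `r = 0` or
`deg r < deg g`, where the degree is that of the reduction modulo the maximal ideal. -/
theorem stmt_3 (R : Type*) [CommRing R] [Finite R] [IsLocalRing R]
    (f g : Polynomial R) (hf : f ≠ 0) (hg : g ∈ nonZeroDivisors (Polynomial R)) :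
    ∃ q r : Polynomial R, f = g * q + r ∧
      (r = 0 ∨ (r.map (Ideal.Quotient.mk (IsLocalRing.maximalIdeal R))).degree <
        (g.map (Ideal.Quotient.mk (IsLocalRing.maximalIdeal R))).degree) := by
  set M := IsLocalRing.maximalIdeal R with hM
  have : IsArtinianRing R := inferInstance
  obtain ⟨k, hk⟩ : IsNilpotent M := by
    rw [hM, ← IsLocalRing.jacobson_eq_maximalIdeal (⊥ : Ideal R) bot_ne_top]
    exact IsArtinianRing.isNilpotent_jacobson_bot
  have hk : M ^ k = ⊥ := by simpa using hk
  set μ := Ideal.Quotient.mk M with hμ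
  -- the reduction of g is nonzero
  have hgbar : g.map μ ≠ 0 := by
    intro h0
    have hgmem : g ∈ M.map (C : R →+* Polynomial R) := by
      rw [Ideal.mem_map_C_iff]
      intro i
      have h1 := congrArg (fun p => Polynomial.coeff p i) h0
      simp only [Polynomial.coeff_map, Polynomial.coeff_zero] at h1
      exact Ideal.Quotient.eq_zero_iff_mem.mp h1
    have : g ^ k ∈ (M ^ k).map (C : R →+* Polynomial R) := by
      rw [Ideal.map_pow]
      exact Ideal.pow_mem_pow hgmem k
    rw [hk, Ideal.map_bot, Ideal.mem_bot] at this
    exact zero_notMem_nonZeroDivisors (this ▸ pow_mem hg k)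
  set n := (g.map μ).natDegree with hn
  -- the coefficient of g at n is a unit
  have hcu : IsUnit (g.coeff n) := by
    by_contra hnu
    have : g.coeff n ∈ M := hnu
    have : (g.map μ).coeff n = 0 := by
      rw [Polynomial.coeff_map]
      exact Ideal.Quotient.eq_zero_iff_mem.mpr this
    exact (Polynomial.leadingCoeff_ne_zero.mpr hgbar) this
  obtain ⟨c, hc⟩ := hcu
  -- the truncation of g at degree n
  set g₀ : Polynomial R := ∑ i ∈ Finset.range (n + 1), C (g.coeff i) * X ^ i with hg₀
  have hg₀coeff : ∀ j, g₀.coeff j = if j ≤ n then g.coeff j else 0 := by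
    intro j
    rw [hg₀, Polynomial.finset_sum_coeff]
    simp only [Polynomial.coeff_C_mul, Polynomial.coeff_X_pow, mul_ite, mul_one, mul_zero]
    by_cases hj : j ≤ n
    · rw [if_pos hj, Finset.sum_eq_single j (fun b _ hb => by simp [Ne.symm hb])
        (fun h => absurd (Finset.mem_range.mpr (by omega)) h)]
      simp
    · rw [if_neg hj, Finset.sum_eq_zero]
      intro b hb
      rw [Finset.mem_range] at hb
      simp [show j ≠ b by omega]
  set e : Polynomial R := g - g₀ with he
  have hecoeff : ∀ j, e.coeff j ∈ M := by
    intro j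
    rw [he, Polynomial.coeff_sub, hg₀coeff]
    by_cases hj : j ≤ n
    · simp [hj]
    · rw [if_neg hj, sub_zero]
      have : (g.map μ).coeff j = 0 :=
        Polynomial.coeff_eq_zero_of_natDegree_lt (by omega)
      rw [Polynomial.coeff_map] at this
      exact Ideal.Quotient.eq_zero_iff_mem.mp this
  have hemem : e ∈ M.map (C : R →+* Polynomial R) :=
    Ideal.mem_map_C_iff.mpr hecoeff
  -- the monic polynomial h
  set h : Polynomial R := C ((c⁻¹ : Rˣ) : R) * g₀ with hh
  have hhcoeff : ∀ j, h.coeff j = ((c⁻¹ : Rˣ) : R) * g₀.coeff j := by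
    intro j; rw [hh, Polynomial.coeff_C_mul]
  have hhn : h.coeff n = 1 := by
    rw [hhcoeff, hg₀coeff, if_pos le_rfl, ← hc, Units.inv_mul]
  have hhmonic : h.Monic := by
    refine Polynomial.monic_of_natDegree_le_of_coeff_eq_one n ?_ hhn
    rw [Polynomial.natDegree_le_iff_coeff_eq_zero]
    intro N hN
    rw [hhcoeff, hg₀coeff, if_neg (by omega), mul_zero]
  have hhdeg : h.degree = (n : WithBot ℕ) := by
    refine le_antisymm ?_ (Polynomial.le_degree_of_ne_zero (by rw [hhn]; exact one_ne_zero))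
    rw [Polynomial.degree_le_iff_coeff_zero]
    intro N hN
    have : n < N := by exact_mod_cast Nat.cast_lt.mp hN
    rw [hhcoeff, hg₀coeff, if_neg (by omega), mul_zero]
  have hge : g = C (c : R) * h + e := by
    rw [hh, ← mul_assoc, ← map_mul, Units.mul_inv, map_one, one_mul, he]
    ring
  -- apply the key lemma with t = k, f arbitrary
  have hfmem : f ∈ ((M : Ideal R) ^ (k - k)).map (C : R →+* Polynomial R) := by
    simp [Nat.sub_self, Ideal.map_top]
  obtain ⟨q, r, hqr, hrdeg⟩ := aux_div hhmonic hge hemem hk k f hfmem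
  refine ⟨q, r, hqr, Or.inr ?_⟩
  have h1 : (r.map μ).degree ≤ r.degree := Polynomial.degree_map_le
  have h2 : (g.map μ).degree = (n : WithBot ℕ) :=
    Polynomial.degree_eq_natDegree hgbar
  rw [h2]
  exact lt_of_le_of_lt h1 (hhdeg ▸ hrdeg)
end

section
/- Every nonzero polynomial of the form g(x) + u p_1(x) + v p_2(x) + uv p_3(x) in R[x], where R = Z_p[u,v]/(u^2,v^2,uv-vu) and g(x) is a nonzero polynomial over Z_p, is regular (not a zero divisor) in R[x]. -/
/-- The ring `Z_p[u,v]/(u^2, v^2, uv - vu)` (the last relation is automatic since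
we work with commutative polynomials). -/
abbrev Rp (p : ℕ) : Type :=
  MvPolynomial (Fin 2) (ZMod p) ⧸
    Ideal.span {(MvPolynomial.X 0 : MvPolynomial (Fin 2) (ZMod p)) ^ 2, (MvPolynomial.X 1) ^ 2}

/-- The image of `u` in `Rp p`. -/
noncomputable def uR (p : ℕ) : Rp p := Ideal.Quotient.mk _ (MvPolynomial.X 0)

/-- The image of `v` in `Rp p`. -/
noncomputable def vR (p : ℕ) : Rp p := Ideal.Quotient.mk _ (MvPolynomial.X 1)

lemma uR_sq (p : ℕ) : uR p ^ 2 = 0 := by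
  rw [uR, ← map_pow, Ideal.Quotient.eq_zero_iff_mem]
  exact Ideal.subset_span (by simp)

lemma vR_sq (p : ℕ) : vR p ^ 2 = 0 := by
  rw [vR, ← map_pow, Ideal.Quotient.eq_zero_iff_mem]
  exact Ideal.subset_span (by simp)

/-- For a nonzero `g ∈ Z_p[x]` and arbitrary `p₁, p₂, p₃ ∈ Z_p[x]`, the
polynomial `g(x) + u p₁(x) + v p₂(x) + uv p₃(x)` is regular (a non zero divisor) in
`R[x]` where `R = Z_p[u,v]/(u^2,v^2,uv-vu)`. -/
theorem stmt_7 (p : ℕ) [Fact p.Prime] (g p₁ p₂ p₃ : Polynomial (ZMod p)) (hg : g ≠ 0) :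
    (g.map (algebraMap (ZMod p) (Rp p))
      + Polynomial.C (uR p) * p₁.map (algebraMap (ZMod p) (Rp p))
      + Polynomial.C (vR p) * p₂.map (algebraMap (ZMod p) (Rp p))
      + Polynomial.C (uR p * vR p) * p₃.map (algebraMap (ZMod p) (Rp p)))
      ∈ nonZeroDivisors (Polynomial (Rp p)) := by
  rw [Polynomial.mem_nonZeroDivisors_iff]
  intro a ha
  -- pick an index where g has nonzero coefficient
  obtain ⟨i, hi⟩ : ∃ i, g.coeff i ≠ 0 := by
    by_contra h
    push_neg at h
    exact hg (Polynomial.ext fun n => by simp [h n])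
  have hcoeff := congrArg (fun q : Polynomial (Rp p) => q.coeff i) ha
  simp only [Polynomial.coeff_smul, Polynomial.coeff_add, Polynomial.coeff_C_mul,
    Polynomial.coeff_map, Polynomial.coeff_zero, smul_eq_mul] at hcoeff
  set c : Rp p := algebraMap (ZMod p) (Rp p) (g.coeff i)
      + uR p * algebraMap (ZMod p) (Rp p) (p₁.coeff i)
      + vR p * algebraMap (ZMod p) (Rp p) (p₂.coeff i)
      + uR p * vR p * algebraMap (ZMod p) (Rp p) (p₃.coeff i) with hc
  have hcu : IsUnit c := by
    have h1 : IsUnit (algebraMap (ZMod p) (Rp p) (g.coeff i)) :=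
      (IsUnit.mk0 _ hi).map _
    have hn : IsNilpotent (uR p * algebraMap (ZMod p) (Rp p) (p₁.coeff i)
        + vR p * algebraMap (ZMod p) (Rp p) (p₂.coeff i)
        + uR p * vR p * algebraMap (ZMod p) (Rp p) (p₃.coeff i)) := by
      have hu : IsNilpotent (uR p) := ⟨2, uR_sq p⟩
      have hv : IsNilpotent (vR p) := ⟨2, vR_sq p⟩
      have t1 := (Commute.all (uR p) _).isNilpotent_mul_right hu
        (y := algebraMap (ZMod p) (Rp p) (p₁.coeff i))
      have t2 := (Commute.all (vR p) _).isNilpotent_mul_right hv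
        (y := algebraMap (ZMod p) (Rp p) (p₂.coeff i))
      have t3 := (Commute.all (uR p) _).isNilpotent_mul_right hu
        (y := vR p * algebraMap (ZMod p) (Rp p) (p₃.coeff i))
      rw [← mul_assoc] at t3
      exact (Commute.all _ _).isNilpotent_add ((Commute.all _ _).isNilpotent_add t1 t2) t3
    have : c = algebraMap (ZMod p) (Rp p) (g.coeff i)
        + (uR p * algebraMap (ZMod p) (Rp p) (p₁.coeff i)
        + vR p * algebraMap (ZMod p) (Rp p) (p₂.coeff i)
        + uR p * vR p * algebraMap (ZMod p) (Rp p) (p₃.coeff i)) := by ring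
    rw [this]
    exact hn.isUnit_add_left_of_commute h1 (Commute.all _ _)
  have : a * c = 0 := by rw [hc]; ring_nf; ring_nf at hcoeff; linear_combination hcoeff
  obtain ⟨cu, hcu'⟩ := hcu
  have := congrArg (· * (↑cu⁻¹ : Rp p)) this
  simpa [← hcu', mul_assoc] using this
end

section
/- If C is a cyclic code of length n over R = Z_p[u,v]/(u^2,v^2,uv-vu), then its Gray image phi_L(C) is a 4-quasi-cyclic linear code of length 4n over Z_p, i.e., phi_L(C) is invariant under the fourth power of the cyclic shift on Z_p^{4n}. -/
lemma u_sq (p : ℕ) : uR p * uR p = 0 := by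
  unfold uR
  rw [← map_mul, ← sq]
  exact Ideal.Quotient.eq_zero_iff_mem.2 (Ideal.subset_span (by simp))

lemma v_sq (p : ℕ) : vR p * vR p = 0 := by
  unfold vR
  rw [← map_mul, ← sq]
  exact Ideal.Quotient.eq_zero_iff_mem.2 (Ideal.subset_span (by simp))

lemma alg_mk (p : ℕ) (a : ZMod p) :
    algebraMap (ZMod p) (Rp p) a = Ideal.Quotient.mk _ (MvPolynomial.C a) := rfl

/-- `x` is representable as `a + b u + c v + d uv`. -/
def IsRepr (p : ℕ) (x : Rp p) : Prop :=
  ∃ a b c d : ZMod p,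
    x = algebraMap (ZMod p) (Rp p) a + algebraMap (ZMod p) (Rp p) b * uR p
        + algebraMap (ZMod p) (Rp p) c * vR p
        + algebraMap (ZMod p) (Rp p) d * (uR p * vR p)

lemma exists_repr (p : ℕ) (x : Rp p) : IsRepr p x := by
  have key : ∀ w : Rp p, IsRepr p w → ∀ i : Fin 2,
      IsRepr p (w * Ideal.Quotient.mk _ (MvPolynomial.X i)) := by
    rintro w ⟨a, b, c, d, rfl⟩ ⟨iv, hi⟩
    interval_cases iv
    · rw [show ((⟨0, hi⟩ : Fin 2)) = 0 from rfl,
        show (Ideal.Quotient.mk _ (MvPolynomial.X 0) : Rp p) = uR p from rfl]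
      refine ⟨0, a, 0, c, ?_⟩
      simp only [map_zero, zero_mul, zero_add, add_zero]
      linear_combination (algebraMap (ZMod p) (Rp p) b
        + algebraMap (ZMod p) (Rp p) d * vR p) * u_sq p
    · rw [show ((⟨1, hi⟩ : Fin 2)) = 1 from rfl,
        show (Ideal.Quotient.mk _ (MvPolynomial.X 1) : Rp p) = vR p from rfl]
      refine ⟨0, 0, a, b, ?_⟩
      simp only [map_zero, zero_mul, zero_add, add_zero]
      linear_combination (algebraMap (ZMod p) (Rp p) c
        + algebraMap (ZMod p) (Rp p) d * uR p) * v_sq p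
  obtain ⟨q, rfl⟩ := Ideal.Quotient.mk_surjective x
  induction q using MvPolynomial.induction_on with
  | C a => exact ⟨a, 0, 0, 0, by simp [alg_mk]⟩
  | add f g hf hg =>
      obtain ⟨a, b, c, d, h1⟩ := hf
      obtain ⟨a', b', c', d', h2⟩ := hg
      refine ⟨a + a', b + b', c + c', d + d', ?_⟩
      rw [map_add, h1, h2]
      simp only [map_add]
      ring
  | mul_X f i hf =>
      rw [map_mul]
      exact key _ hf i

section GrayLin

variable {p : ℕ} (gray : Rp p → (Fin 4 → ZMod p))
variable (hgray : ∀ a b c d : ZMod p,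
      gray (algebraMap (ZMod p) (Rp p) a + algebraMap (ZMod p) (Rp p) b * uR p
          + algebraMap (ZMod p) (Rp p) c * vR p
          + algebraMap (ZMod p) (Rp p) d * (uR p * vR p))
        = ![a + b + c + d, c + d, b + d, d])

include hgray

lemma gray_add (x y : Rp p) : gray (x + y) = gray x + gray y := by
  obtain ⟨a, b, c, d, rfl⟩ := exists_repr p x
  obtain ⟨a', b', c', d', rfl⟩ := exists_repr p y
  have hsum : (algebraMap (ZMod p) (Rp p) a + algebraMap (ZMod p) (Rp p) b * uR p
          + algebraMap (ZMod p) (Rp p) c * vR p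
          + algebraMap (ZMod p) (Rp p) d * (uR p * vR p))
      + (algebraMap (ZMod p) (Rp p) a' + algebraMap (ZMod p) (Rp p) b' * uR p
          + algebraMap (ZMod p) (Rp p) c' * vR p
          + algebraMap (ZMod p) (Rp p) d' * (uR p * vR p))
      = algebraMap (ZMod p) (Rp p) (a + a') + algebraMap (ZMod p) (Rp p) (b + b') * uR p
          + algebraMap (ZMod p) (Rp p) (c + c') * vR p
          + algebraMap (ZMod p) (Rp p) (d + d') * (uR p * vR p) := by
    simp only [map_add]; ring
  rw [hsum, hgray, hgray, hgray]
  funext i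
  fin_cases i <;> simp <;> ring

lemma gray_smul (z : ZMod p) (x : Rp p) : gray (z • x) = z • gray x := by
  obtain ⟨a, b, c, d, rfl⟩ := exists_repr p x
  have hsm : z • (algebraMap (ZMod p) (Rp p) a + algebraMap (ZMod p) (Rp p) b * uR p
          + algebraMap (ZMod p) (Rp p) c * vR p
          + algebraMap (ZMod p) (Rp p) d * (uR p * vR p))
      = algebraMap (ZMod p) (Rp p) (z * a) + algebraMap (ZMod p) (Rp p) (z * b) * uR p
          + algebraMap (ZMod p) (Rp p) (z * c) * vR p
          + algebraMap (ZMod p) (Rp p) (z * d) * (uR p * vR p) := by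
    rw [← algebraMap_smul (Rp p) z, smul_eq_mul]
    simp only [map_mul]
    ring
  rw [hsm, hgray, hgray]
  funext i
  fin_cases i <;> simp <;> ring

end GrayLin

lemma shift_arith (n : ℕ) (hn : 0 < n) (jv : ℕ) (hj : jv < 4*n) :
    (jv + (4*n - 4 % (4*n))) % (4*n) % 4 = jv % 4 ∧
    (jv + (4*n - 4 % (4*n))) % (4*n) / 4 = (jv/4 + (n - 1 % n)) % n := by
  rcases Nat.lt_or_ge n 2 with h2 | h2
  · have hn1 : n = 1 := by omega
    subst hn1
    simp only [Nat.mul_one] at *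
    omega
  · have h4m : 4 % (4*n) = 4 := Nat.mod_eq_of_lt (by omega)
    have h1n : 1 % n = 1 := Nat.mod_eq_of_lt (by omega)
    rw [h4m, h1n]
    have hq : jv / 4 < n := by omega
    rcases Nat.lt_or_ge jv 4 with h4 | h4
    · have e1 : (jv + (4*n - 4)) % (4*n) = jv + (4*n - 4) := Nat.mod_eq_of_lt (by omega)
      have e2 : (jv/4 + (n-1)) % n = n - 1 := by
        have : jv / 4 = 0 := by omega
        rw [this, Nat.zero_add]
        exact Nat.mod_eq_of_lt (by omega)
      rw [e1, e2]
      omega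
    · have e1 : (jv + (4*n - 4)) % (4*n) = jv - 4 := by
        rw [show jv + (4*n - 4) = (jv - 4) + 4*n by omega, Nat.add_mod_right]
        exact Nat.mod_eq_of_lt (by omega)
      have e2 : (jv/4 + (n-1)) % n = jv/4 - 1 := by
        rw [show jv/4 + (n-1) = (jv/4 - 1) + n by omega, Nat.add_mod_right]
        exact Nat.mod_eq_of_lt (by omega)
      rw [e1, e2]
      omega

/-- If `C` is a cyclic code of length `n` over
`R = Z_p[u,v]/(u^2,v^2,uv-vu)`, then its Gray image `φ_L(C)` is a linear
`4`-quasi-cyclic code of length `4n` over `Z_p`, i.e. a `Z_p`-subspace invariant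
under the fourth power of the cyclic shift. -/
theorem stmt_12 (p n : ℕ) [Fact p.Prime] [NeZero n] [NeZero (4 * n)]
    (gray : Rp p → (Fin 4 → ZMod p))
    (hgray : ∀ a b c d : ZMod p,
      gray (algebraMap (ZMod p) (Rp p) a + algebraMap (ZMod p) (Rp p) b * uR p
          + algebraMap (ZMod p) (Rp p) c * vR p
          + algebraMap (ZMod p) (Rp p) d * (uR p * vR p))
        = ![a + b + c + d, c + d, b + d, d])
    (C : Submodule (Rp p) (Fin n → Rp p))
    (hcyc : ∀ x ∈ C, (fun i => x (i - 1)) ∈ C) :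
    ∃ D : Submodule (ZMod p) (Fin (4 * n) → ZMod p),
      (D : Set (Fin (4 * n) → ZMod p))
        = (fun (x : Fin n → Rp p) (j : Fin (4 * n)) =>
            gray (x ⟨j.val / 4, by have := j.isLt; omega⟩) ⟨j.val % 4, by omega⟩) ''
            (C : Set (Fin n → Rp p)) ∧
      ∀ y ∈ D, (fun j => y (j - 4)) ∈ D := by
  set Φ : (Fin n → Rp p) → (Fin (4 * n) → ZMod p) :=
    fun (x : Fin n → Rp p) (j : Fin (4 * n)) =>
      gray (x ⟨j.val / 4, by have := j.isLt; omega⟩) ⟨j.val % 4, by omega⟩ with hΦ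
  have Φadd : ∀ x y, Φ (x + y) = Φ x + Φ y := by
    intro x y
    funext j
    exact congrFun (gray_add gray hgray _ _) _
  have Φsmul : ∀ (z : ZMod p) x, Φ (z • x) = z • Φ x := by
    intro z x
    funext j
    exact congrFun (gray_smul gray hgray z _) _
  let L : (Fin n → Rp p) →ₗ[ZMod p] (Fin (4 * n) → ZMod p) :=
    { toFun := Φ, map_add' := Φadd, map_smul' := Φsmul }
  refine ⟨(C.restrictScalars (ZMod p)).map L, ?_, ?_⟩
  · rw [Submodule.map_coe]
    rfl
  · rintro y hy
    rw [Submodule.mem_map] at hy ⊢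
    obtain ⟨x, hx, rfl⟩ := hy
    refine ⟨fun i => x (i - 1), hcyc x hx, ?_⟩
    funext j
    have hjv : (j - 4 : Fin (4 * n)).val = (j.val + (4*n - 4 % (4*n))) % (4*n) := by
      rw [Fin.sub_def]
      simp only [Nat.add_comm]
      rfl
    obtain ⟨h1, h2⟩ := shift_arith n (Nat.pos_of_ne_zero (NeZero.ne n)) j.val j.isLt
    show gray (x ((⟨j.val / 4, by have := j.isLt; omega⟩ : Fin n) - 1))
        ⟨j.val % 4, by omega⟩
      = gray (x ⟨(j - 4 : Fin (4 * n)).val / 4, by have := (j - 4 : Fin (4 * n)).isLt; omega⟩)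
        ⟨(j - 4 : Fin (4 * n)).val % 4, by omega⟩
    have e1 : (⟨j.val / 4, by have := j.isLt; omega⟩ : Fin n) - 1
        = ⟨(j - 4 : Fin (4 * n)).val / 4, by have := (j - 4 : Fin (4 * n)).isLt; omega⟩ := by
      apply Fin.ext
      rw [Fin.sub_def]
      simp only [Fin.val_mk]
      rw [hjv, h2]
      simp [Fin.val_one', Nat.add_comm]
    have e2 : (⟨j.val % 4, by omega⟩ : Fin 4)
        = ⟨(j - 4 : Fin (4 * n)).val % 4, by omega⟩ := by
      apply Fin.ext
      simp only [Fin.val_mk]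
      rw [hjv, h1]
    rw [e1, e2]
end
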